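/- arXiv:1107.4595 — 4 statements merged into one kernel-verified Lean document; each statement's English description precedes it below -/
import Mathlib

section
/- Let K be a field and ℓ a prime number different from the characteristic of K. Let a ∈ K^×, let n ≥ 1, and assume ζ_{ℓ^n} ∈ K. Then either K(ℓ^n√a) = K (i.e. a is an ℓ^n-th power in K^×), or there is a smallest integer h with 1 ≤ h ≤ n such that K(ℓ^h√a) ≠ K, and in the latter case [K(ℓ^n√a) : K] = ℓ^{n−h+1}. -/
noncomputable section
open IntermediateField Module

def cyclo (K : Type*) [Field K] (m : ℕ) : IntermediateField K (AlgebraicClosure K) :=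
  IntermediateField.adjoin K {ζ | IsPrimitiveRoot ζ m}

def cycloInf (K : Type*) [Field K] (ℓ : ℕ) : IntermediateField K (AlgebraicClosure K) :=
  ⨆ m : ℕ, cyclo K (ℓ ^ m)

def kroot (K : Type*) [Field K] (n : ℕ) (a : K) : IntermediateField K (AlgebraicClosure K) :=
  IntermediateField.adjoin K {x | x ^ n = algebraMap K (AlgebraicClosure K) a}

def kummerDeg (K : Type*) [Field K] (m n : ℕ) (a : K) : ℕ :=
  finrank (cyclo K m) (IntermediateField.adjoin (cyclo K m)
    {x : AlgebraicClosure K | x ^ n = algebraMap K (AlgebraicClosure K) a})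

def IsDivisible (K : Type*) [Field K] (ℓ : ℕ) (a : K) : Prop :=
  ∀ n : ℕ, ∃ c : K, c ^ ℓ ^ n = a

def StronglyIndivisible (K : Type*) [Field K] (ℓ : ℕ) (b : K) : Prop :=
  ∀ ξ : K, (∃ k : ℕ, 0 < k ∧ ξ ^ k = 1) → ∀ c : K, c ^ ℓ ≠ b * ξ

section Aux
open Polynomial

/-- irreducibility of `X^(2^m) - b` when `i ∈ K` and `b` is not a square. -/
theorem irred_two_pow (m : ℕ) : ∀ (K : Type*) [Field K] (i : K), i ^ 2 = -1 →
    ∀ (b : K), (∀ c : K, c ^ 2 ≠ b) → Irreducible (X ^ 2 ^ m - C b) := by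
  induction m with
  | zero =>
    intro K _ i hi b hb
    simpa using irreducible_X_sub_C b
  | succ m IH =>
    intro K _ i hi b hb
    have h2 : Irreducible (X ^ 2 - C b) :=
      X_pow_sub_C_irreducible_of_prime Nat.prime_two hb
    have : (2 : ℕ) ^ (m + 1) = 2 ^ m * 2 := by ring
    rw [this]
    apply X_pow_mul_sub_C_irreducible h2
    intro E _ _ x hx
    have hint : IsIntegral K x := not_not.mp fun h ↦ by
      simpa only [degree_zero, degree_X_pow_sub_C (by norm_num : 0 < 2),
        WithBot.natCast_ne_bot] using congr_arg degree (hx.symm.trans (dif_neg h))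
    have hdeg : (minpoly K x).natDegree = 2 := by
      rw [hx, natDegree_X_pow_sub_C]
    have hminpoly : minpoly K (AdjoinSimple.gen K x) = X ^ 2 - C b := by
      rw [minpoly_gen, hx]
    apply IH K⟮x⟯ (algebraMap K K⟮x⟯ i)
      (by rw [← map_pow, hi, map_neg, map_one])
    intro c hc
    have hfd : FiniteDimensional K K⟮x⟯ := adjoin.finiteDimensional hint
    have hnorm : (Algebra.norm K c) ^ 2 = Algebra.norm K (AdjoinSimple.gen K x) := by
      rw [← map_pow, hc]
    rw [← adjoin.powerBasis_gen hint,
      Algebra.PowerBasis.norm_gen_eq_coeff_zero_minpoly] at hnorm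
    have hpbdim : (adjoin.powerBasis hint).dim = 2 := by
      rw [adjoin.powerBasis_dim, hdeg]
    rw [adjoin.powerBasis_gen hint, hminpoly, hpbdim] at hnorm
    simp only [coeff_sub, coeff_X_pow, coeff_C] at hnorm
    norm_num at hnorm
    apply hb (i * Algebra.norm K c)
    rw [mul_pow, hi, hnorm]
    ring

theorem irred_pp {K : Type*} [Field K] {ℓ : ℕ} (hℓ : ℓ.Prime) {b : K}
    (hb : ∀ c : K, c ^ ℓ ≠ b) (m : ℕ)
    (h2 : ℓ = 2 → 2 ≤ m → ∃ i : K, i ^ 2 = -1) :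
    Irreducible (X ^ ℓ ^ m - C b) := by
  by_cases hl2 : ℓ = 2
  · subst hl2
    match m with
    | 0 => simpa using irreducible_X_sub_C b
    | 1 => simpa using X_pow_sub_C_irreducible_of_prime Nat.prime_two hb
    | (k+2) =>
      obtain ⟨i, hi⟩ := h2 rfl (by omega)
      exact irred_two_pow _ K i hi b hb
  · exact X_pow_sub_C_irreducible_of_prime_pow hℓ hl2 m hb

theorem kroot_eq_adjoin {K : Type*} [Field K] {ℓ n k : ℕ} (hℓ : 0 < ℓ) {ζ : K}
    (hζ : IsPrimitiveRoot ζ (ℓ ^ n)) (hk : k ≤ n) {a : K} (ha : a ≠ 0)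
    {y : AlgebraicClosure K} (hy : y ^ ℓ ^ k = algebraMap K (AlgebraicClosure K) a) :
    kroot K (ℓ ^ k) a = K⟮y⟯ := by
  have hne : NeZero (ℓ ^ n) := ⟨pow_ne_zero _ hℓ.ne'⟩
  have hζA : IsPrimitiveRoot (algebraMap K (AlgebraicClosure K) ζ) (ℓ ^ n) :=
    hζ.map_of_injective (algebraMap K (AlgebraicClosure K)).injective
  have hy0 : y ≠ 0 := fun h ↦ by
    apply ha
    have := hy
    rw [h, zero_pow (pow_ne_zero _ hℓ.ne')] at this
    exact ((_root_.map_eq_zero _).mp this.symm)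
  apply le_antisymm
  · rw [kroot, adjoin_le_iff]
    intro z hz
    have hz' : z ^ ℓ ^ k = y ^ ℓ ^ k := by rw [hy]; exact hz
    have hu : (z / y) ^ ℓ ^ n = 1 := by
      have h1 : (z / y) ^ ℓ ^ k = 1 := by
        rw [div_pow, hz', div_self (pow_ne_zero _ hy0)]
      calc (z / y) ^ ℓ ^ n = ((z / y) ^ ℓ ^ k) ^ ℓ ^ (n - k) := by
            rw [← pow_mul, ← pow_add, Nat.add_sub_cancel' hk]
        _ = 1 := by rw [h1, one_pow]
    obtain ⟨j, _, hj⟩ := hζA.eq_pow_of_pow_eq_one hu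
    have hzy : z = algebraMap K (AlgebraicClosure K) (ζ ^ j) * y := by
      rw [map_pow, hj, div_mul_cancel₀ _ hy0]
    rw [hzy]
    exact mul_mem (IntermediateField.algebraMap_mem _ _) (mem_adjoin_simple_self K y)
  · rw [adjoin_simple_le_iff]
    exact subset_adjoin K _ hy

theorem kroot_bot_iff {K : Type*} [Field K] {ℓ n k : ℕ} (hℓ : 0 < ℓ) {ζ : K}
    (hζ : IsPrimitiveRoot ζ (ℓ ^ n)) (hk : k ≤ n) {a : K} (ha : a ≠ 0) :
    kroot K (ℓ ^ k) a = ⊥ ↔ ∃ c : K, c ^ ℓ ^ k = a := by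
  constructor
  · intro hbot
    obtain ⟨y, hy⟩ := IsAlgClosed.exists_pow_nat_eq
      (algebraMap K (AlgebraicClosure K) a) (pow_pos hℓ k)
    rw [kroot_eq_adjoin hℓ hζ hk ha hy, adjoin_simple_eq_bot_iff, mem_bot] at hbot
    obtain ⟨c, rfl⟩ := hbot
    exact ⟨c, (algebraMap K (AlgebraicClosure K)).injective (by rw [map_pow, hy])⟩
  · rintro ⟨c, rfl⟩
    have hy : (algebraMap K (AlgebraicClosure K) c) ^ ℓ ^ k
        = algebraMap K (AlgebraicClosure K) (c ^ ℓ ^ k) := by rw [map_pow]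
    rw [kroot_eq_adjoin hℓ hζ hk ha hy, adjoin_simple_eq_bot_iff, mem_bot]
    exact ⟨c, rfl⟩

theorem exists_sqrt_neg_one {K : Type*} [Field K] {n : ℕ} (hn : 2 ≤ n) {ζ : K}
    (hζ : IsPrimitiveRoot ζ (2 ^ n)) : ∃ i : K, i ^ 2 = -1 := by
  refine ⟨ζ ^ 2 ^ (n - 2), ?_⟩
  have h1 : (ζ ^ 2 ^ (n - 2)) ^ 2 = ζ ^ 2 ^ (n - 1) := by
    rw [← pow_mul]
    congr 1
    rw [← pow_succ]
    congr 1
    omega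
  rw [h1]
  have h2 : (ζ ^ 2 ^ (n - 1)) * (ζ ^ 2 ^ (n - 1)) = 1 := by
    rw [← pow_add]
    have : 2 ^ (n - 1) + 2 ^ (n - 1) = 2 ^ n := by
      rw [← two_mul, ← pow_succ']
      congr 1
      omega
    rw [this, hζ.pow_eq_one]
  rcases mul_self_eq_one_iff.mp h2 with he | he
  · exfalso
    have hdvd : 2 ^ n ∣ 2 ^ (n - 1) := hζ.dvd_of_pow_eq_one _ he
    have := Nat.le_of_dvd (by positivity) hdvd
    have h3 : (2 : ℕ) ^ (n - 1) < 2 ^ n := Nat.pow_lt_pow_right one_lt_two (by omega)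
    omega
  · exact he

end Aux

theorem stmt_3 (K : Type*) [Field K] (ℓ : ℕ) (hℓ : ℓ.Prime) (hchar : (ℓ : K) ≠ 0)
    (a : K) (ha : a ≠ 0) (n : ℕ) (hn : 1 ≤ n)
    (hζ : ∃ ζ : K, IsPrimitiveRoot ζ (ℓ ^ n)) :
    kroot K (ℓ ^ n) a = ⊥ ∨
      ∃ h : ℕ, 1 ≤ h ∧ h ≤ n ∧ kroot K (ℓ ^ h) a ≠ ⊥ ∧
        (∀ h' : ℕ, 1 ≤ h' → h' < h → kroot K (ℓ ^ h') a = ⊥) ∧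
        finrank K (kroot K (ℓ ^ n) a) = ℓ ^ (n - h + 1) := by
  classical
  obtain ⟨ζ, hζ⟩ := hζ
  have hl : 0 < ℓ := hℓ.pos
  by_cases hful : ∃ c : K, c ^ ℓ ^ n = a
  · exact Or.inl ((kroot_bot_iff hl hζ le_rfl ha).mpr hful)
  right
  have hP : ∃ k, ¬∃ c : K, c ^ ℓ ^ k = a := ⟨n, hful⟩
  set h := Nat.find hP with hh
  have hPh : ¬∃ c : K, c ^ ℓ ^ h = a := Nat.find_spec hP
  have hmin : ∀ k, k < h → ∃ c : K, c ^ ℓ ^ k = a := fun k hk ↦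
    not_not.mp (Nat.find_min hP hk)
  have h1 : 1 ≤ h := by
    by_contra h0
    exact hPh (by rw [show h = 0 by omega]; exact ⟨a, by simp⟩)
  have hhn : h ≤ n := Nat.find_le hful
  -- obtain b with b ^ ℓ^(h-1) = a and b not an ℓ-th power
  obtain ⟨b, hb⟩ := hmin (h - 1) (by omega)
  have hbℓ : ∀ c : K, c ^ ℓ ≠ b := by
    intro c hc
    apply hPh
    refine ⟨c, ?_⟩
    rw [← hb, ← hc, ← pow_mul]
    congr 1
    rw [← pow_succ']
    congr 1
    omega
  set m := n - h + 1 with hm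
  -- square root of -1 if needed
  have h2 : ℓ = 2 → 2 ≤ m → ∃ i : K, i ^ 2 = -1 := by
    intro hl2 hm2
    subst hl2
    exact exists_sqrt_neg_one (by omega) hζ
  have hirr : Irreducible (Polynomial.X ^ ℓ ^ m - Polynomial.C b) := irred_pp hℓ hbℓ m h2
  -- find a good root y of X^(ℓ^m) - b generating kroot
  obtain ⟨x, hx⟩ := IsAlgClosed.exists_pow_nat_eq
    (algebraMap K (AlgebraicClosure K) a) (pow_pos hl n)
  have hkx : kroot K (ℓ ^ n) a = K⟮x⟯ := kroot_eq_adjoin hl hζ le_rfl ha hx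
  have hζA : IsPrimitiveRoot (algebraMap K (AlgebraicClosure K) ζ) (ℓ ^ n) :=
    hζ.map_of_injective (algebraMap K (AlgebraicClosure K)).injective
  have hb0 : b ≠ 0 := by
    intro hb0
    rw [hb0, zero_pow (pow_ne_zero _ hl.ne')] at hb
    exact ha hb.symm
  have hfb0 : algebraMap K (AlgebraicClosure K) b ≠ 0 := by
    simpa using hb0
  have hmn : ℓ ^ m * ℓ ^ (h - 1) = ℓ ^ n := by
    rw [← pow_add]
    congr 1
    omega
  have hu : (x ^ ℓ ^ m / algebraMap K (AlgebraicClosure K) b) ^ ℓ ^ (h - 1) = 1 := by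
    rw [div_pow, ← pow_mul, hmn, hx, ← map_pow, hb, div_self]
    simpa using ha
  have hu' : (x ^ ℓ ^ m / algebraMap K (AlgebraicClosure K) b) ^ ℓ ^ n = 1 := by
    calc (x ^ ℓ ^ m / algebraMap K (AlgebraicClosure K) b) ^ ℓ ^ n
        = ((x ^ ℓ ^ m / algebraMap K (AlgebraicClosure K) b) ^ ℓ ^ (h - 1)) ^ ℓ ^ (n - (h-1)) := by
          rw [← pow_mul, ← pow_add]
          congr 2
          omega
      _ = 1 := by rw [hu, one_pow]
  have hne : NeZero (ℓ ^ n) := ⟨pow_ne_zero _ hl.ne'⟩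
  obtain ⟨j, hjlt, hj⟩ := hζA.eq_pow_of_pow_eq_one hu'
  -- ℓ^m ∣ j
  have hdvd : ℓ ^ n ∣ j * ℓ ^ (h - 1) := by
    apply hζA.dvd_of_pow_eq_one
    rw [pow_mul, hj, hu]
  have hjm : ℓ ^ m ∣ j := by
    have : ℓ ^ m * ℓ ^ (h - 1) ∣ j * ℓ ^ (h - 1) := hmn ▸ hdvd
    exact (Nat.mul_dvd_mul_iff_right (pow_pos hl (h - 1))).mp this
  obtain ⟨s, hs⟩ := hjm
  set y := x / algebraMap K (AlgebraicClosure K) (ζ ^ s) with hy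
  have hζs0 : algebraMap K (AlgebraicClosure K) (ζ ^ s) ≠ 0 := by
    have : ζ ≠ 0 := hζ.ne_zero (pow_ne_zero _ hl.ne')
    simpa using pow_ne_zero s this
  have hyb : y ^ ℓ ^ m = algebraMap K (AlgebraicClosure K) b := by
    rw [hy, div_pow]
    rw [div_eq_iff (pow_ne_zero _ hζs0)]
    have : (algebraMap K (AlgebraicClosure K) (ζ ^ s)) ^ ℓ ^ m
        = (algebraMap K (AlgebraicClosure K) ζ) ^ j := by
      rw [map_pow, ← pow_mul, hs, mul_comm]
    rw [this, hj, mul_comm, div_mul_cancel₀ _ hfb0]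
  have hxy : K⟮x⟯ = K⟮y⟯ := by
    apply le_antisymm
    · rw [adjoin_simple_le_iff]
      have : x = y * algebraMap K (AlgebraicClosure K) (ζ ^ s) := by
        rw [hy, div_mul_cancel₀ _ hζs0]
      rw [this]
      exact mul_mem (mem_adjoin_simple_self K y) (IntermediateField.algebraMap_mem _ _)
    · rw [adjoin_simple_le_iff, hy]
      exact div_mem (mem_adjoin_simple_self K x) (IntermediateField.algebraMap_mem _ _)
  have hyint : IsIntegral K y := by
    refine ⟨Polynomial.X ^ ℓ ^ m - Polynomial.C b,
      Polynomial.monic_X_pow_sub_C _ (pow_ne_zero _ hl.ne'), ?_⟩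
    simp [hyb, sub_eq_zero]
  have hmp : minpoly K y = Polynomial.X ^ ℓ ^ m - Polynomial.C b := by
    refine (minpoly.eq_of_irreducible_of_monic hirr ?_
      (Polynomial.monic_X_pow_sub_C _ (pow_ne_zero _ hl.ne'))).symm
    simp [hyb, sub_eq_zero]
  refine ⟨h, h1, hhn, ?_, ?_, ?_⟩
  · intro hbot
    exact hPh ((kroot_bot_iff hl hζ hhn ha).mp hbot)
  · intro h' _ hh'
    exact (kroot_bot_iff hl hζ (by omega) ha).mpr (hmin h' hh')
  · rw [hkx, hxy, adjoin.finrank hyint, hmp, Polynomial.natDegree_X_pow_sub_C]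
end
end

section
/- Let K be a field and ℓ a prime number different from the characteristic of K. Assume that K ≠ K_ℓ or K = K_{ℓ^∞}. Then for every a ∈ K^×, either a is divisible in K, or a = b^{ℓ^d} for some integer d ≥ 0 and some b ∈ K^× which is strongly indivisible; moreover the integer d does not depend on the choice of such b. -/
noncomputable section
open IntermediateField Module

/-- In a commutative group, if `η ^ t = 1` and `ℓ` is coprime to `t`,
then `η` is an `ℓ`-th power. -/
lemma aux_coprime_pow {G : Type*} [CommGroup G] {ℓ t : ℕ} (hcop : Nat.Coprime ℓ t)
    (η : G) (hη : η ^ t = 1) : ∃ c : G, c ^ ℓ = η := by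
  obtain ⟨u, v, huv⟩ := Nat.isCoprime_iff_coprime.2 hcop
  refine ⟨η ^ u, ?_⟩
  have h1 : η ^ ((t : ℤ) * v) = 1 := by
    rw [zpow_mul, zpow_natCast, hη, one_zpow]
  calc (η ^ u) ^ ℓ = η ^ (u * (ℓ : ℤ)) := by rw [← zpow_natCast (η ^ u) ℓ, ← zpow_mul]
    _ = η ^ (u * (ℓ : ℤ) + (t : ℤ) * v) := by rw [zpow_add, h1, mul_one]
    _ = η := by rw [show u * (ℓ : ℤ) + (t : ℤ) * v = 1 by linarith [huv], zpow_one]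

/-- Under the hypothesis `hK`, every root of unity in `K` is an `ℓ`-th power. -/
lemma aux_root_unity_pow (K : Type*) [Field K] (ℓ : ℕ) (hℓ : ℓ.Prime)
    (hK : (¬ ∃ ζ : K, IsPrimitiveRoot ζ ℓ) ∨ (∀ m : ℕ, ∃ ζ : K, IsPrimitiveRoot ζ (ℓ ^ m)))
    (ξ : K) (k : ℕ) (hk : 0 < k) (hξk : ξ ^ k = 1) : ∃ c : K, c ^ ℓ = ξ := by
  have hξ0 : ξ ≠ 0 := by
    intro h0
    rw [h0, zero_pow hk.ne'] at hξk
    exact zero_ne_one hξk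
  set ξu : Kˣ := Units.mk0 ξ hξ0 with hξu
  have hξuk : ξu ^ k = 1 := by
    ext
    simpa [hξu] using hξk
  have hfin : IsOfFinOrder ξu := isOfFinOrder_iff_pow_eq_one.2 ⟨k, hk, hξuk⟩
  set n := orderOf ξu with hn
  have hn0 : 0 < n := hfin.orderOf_pos
  set s := n.factorization ℓ with hs
  set t := n / ℓ ^ s with ht
  have hst : ℓ ^ s * t = n := Nat.ordProj_mul_ordCompl_eq_self n ℓ
  have htd : ¬ ℓ ∣ t := Nat.not_dvd_ordCompl hℓ hn0.ne'
  have hcop : Nat.Coprime ℓ t := (hℓ.coprime_iff_not_dvd).2 htd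
  have ht0 : 0 < t := Nat.ordCompl_pos ℓ hn0.ne'
  -- claim 1: ξu ^ (ℓ ^ s) is an ℓ-th power
  obtain ⟨c1, hc1⟩ : ∃ c : Kˣ, c ^ ℓ = ξu ^ (ℓ ^ s) := by
    apply aux_coprime_pow hcop
    rw [← pow_mul, hst, pow_orderOf_eq_one]
  -- claim 2: ξu ^ t is an ℓ-th power
  have hts : (ξu ^ t) ^ (ℓ ^ s) = 1 := by
    rw [← pow_mul, mul_comm, hst, pow_orderOf_eq_one]
  obtain ⟨c2, hc2⟩ : ∃ c : Kˣ, c ^ ℓ = ξu ^ t := by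
    rcases Nat.eq_zero_or_pos s with hs0 | hs0
    · refine ⟨1, ?_⟩
      rw [hs0, pow_zero, pow_one] at hts
      simp [hts]
    rcases hK with hno | hall
    · exfalso
      set η : Kˣ := ξu ^ (t * ℓ ^ (s - 1)) with hη
      have hηℓ : η ^ ℓ = 1 := by
        rw [hη, ← pow_mul, mul_assoc, ← pow_succ, Nat.sub_add_cancel hs0, mul_comm, hst,
          pow_orderOf_eq_one]
      have hη1 : η ≠ 1 := by
        intro h1
        have hdvd : n ∣ t * ℓ ^ (s - 1) := orderOf_dvd_of_pow_eq_one (by rw [← hη, h1])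
        have hlt : t * ℓ ^ (s - 1) < n := by
          rw [← hst, mul_comm]
          exact Nat.mul_lt_mul_of_lt_of_le (Nat.pow_lt_pow_right hℓ.one_lt
            (Nat.sub_lt hs0 one_pos)) le_rfl ht0
        exact absurd (Nat.le_of_dvd (Nat.mul_pos ht0 (pow_pos hℓ.pos _)) hdvd)
          (not_le.2 hlt)
      have hord : orderOf η = ℓ := by
        rcases (Nat.Prime.eq_one_or_self_of_dvd hℓ _ (orderOf_dvd_of_pow_eq_one hηℓ)) with h | h
        · exact absurd (orderOf_eq_one_iff.1 h) hη1
        · exact h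
      have hprim : IsPrimitiveRoot η ℓ := hord ▸ IsPrimitiveRoot.orderOf η
      exact hno ⟨(η : K), IsPrimitiveRoot.coe_units_iff.2 hprim⟩
    · obtain ⟨ζ, hζ⟩ := hall (s + 1)
      have hζℓ : IsPrimitiveRoot (ζ ^ ℓ) (ℓ ^ s) :=
        hζ.pow (pow_pos hℓ.pos _) (by ring)
      haveI : NeZero (ℓ ^ s) := ⟨(pow_pos hℓ.pos _).ne'⟩
      have htsK : ((ξ : K) ^ t) ^ (ℓ ^ s) = 1 := by
        have := congrArg (Units.val) hts
        simpa [hξu] using this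
      obtain ⟨i, _, hi⟩ := hζℓ.eq_pow_of_pow_eq_one htsK
      have hiK : (ζ ^ i) ^ ℓ = ξ ^ t := by
        rw [← hi]; ring
      have hζi0 : ζ ^ i ≠ 0 := by
        intro h0
        rw [h0, zero_pow hℓ.ne_zero] at hiK
        exact (pow_ne_zero t hξ0) hiK.symm
      refine ⟨Units.mk0 (ζ ^ i) hζi0, ?_⟩
      ext
      simpa [hξu] using hiK
  -- combine via Bezout for ℓ^s and t
  obtain ⟨u, v, huv⟩ := Nat.isCoprime_iff_coprime.2 (Nat.Coprime.pow_left s hcop)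
  refine ⟨((c1 ^ u * c2 ^ v : Kˣ) : K), ?_⟩
  have key : (c1 ^ u * c2 ^ v) ^ ℓ = ξu := by
    have e1 : (c1 ^ u) ^ ℓ = (ξu ^ ((ℓ ^ s : ℕ) : ℤ)) ^ u := by
      rw [← zpow_natCast (c1 ^ u) ℓ, ← zpow_mul, mul_comm u ((ℓ : ℕ) : ℤ), zpow_mul,
        zpow_natCast c1 ℓ, hc1, ← zpow_natCast ξu (ℓ ^ s)]
    have e2 : (c2 ^ v) ^ ℓ = (ξu ^ ((t : ℕ) : ℤ)) ^ v := by
      rw [← zpow_natCast (c2 ^ v) ℓ, ← zpow_mul, mul_comm v ((ℓ : ℕ) : ℤ), zpow_mul,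
        zpow_natCast c2 ℓ, hc2, ← zpow_natCast ξu t]
    rw [mul_pow, e1, e2, ← zpow_mul, ← zpow_mul, ← zpow_add,
      show ((ℓ ^ s : ℕ) : ℤ) * u + ((t : ℕ) : ℤ) * v = 1 by push_cast at huv ⊢; linarith, zpow_one]
  calc ((c1 ^ u * c2 ^ v : Kˣ) : K) ^ ℓ = (((c1 ^ u * c2 ^ v) ^ ℓ : Kˣ) : K) := by
        rw [Units.val_pow_eq_pow_val]
    _ = ξ := by rw [key]; rfl

/-- If `a = b^{ℓ^d} = b'^{ℓ^{d'}}` with `b'` strongly indivisible and `d' < d`, contradiction. -/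
lemma aux_unique {K : Type*} [Field K] {ℓ : ℕ} (hℓ : ℓ.Prime) {a b b' : K} {d d' : ℕ}
    (ha : a ≠ 0) (hb : a = b ^ ℓ ^ d) (hb' : a = b' ^ ℓ ^ d')
    (hsi : StronglyIndivisible K ℓ b') (hlt : d' < d) : False := by
  have hb0 : b ≠ 0 := by
    intro h0; rw [h0, zero_pow (pow_ne_zero _ hℓ.ne_zero)] at hb; exact ha hb
  have hb'0 : b' ≠ 0 := by
    intro h0; rw [h0, zero_pow (pow_ne_zero _ hℓ.ne_zero)] at hb'; exact ha hb'
  set e : K := b ^ ℓ ^ (d - d') with he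
  have he0 : e ≠ 0 := pow_ne_zero _ hb0
  set ξ : K := b' / e with hξdef
  have hξ0 : ξ ≠ 0 := div_ne_zero hb'0 he0
  have heq : e ^ ℓ ^ d' = b' ^ ℓ ^ d' := by
    rw [he, ← pow_mul, ← pow_add, Nat.sub_add_cancel hlt.le, ← hb, hb']
  have hξk : ξ ^ ℓ ^ d' = 1 := by
    rw [hξdef, div_pow, heq, div_self (pow_ne_zero _ hb'0)]
  have hξinv : (ξ⁻¹) ^ ℓ ^ d' = 1 := by
    rw [inv_pow, hξk, inv_one]
  have hc : (b ^ ℓ ^ (d - d' - 1)) ^ ℓ = b' * ξ⁻¹ := by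
    rw [← pow_mul, ← pow_succ, Nat.sub_add_cancel (by omega : 1 ≤ d - d'), hξdef, ← he]
    field_simp
  exact hsi ξ⁻¹ ⟨ℓ ^ d', pow_pos hℓ.pos d', hξinv⟩ _ hc

theorem stmt_4 (K : Type*) [Field K] (ℓ : ℕ) (hℓ : ℓ.Prime) (hchar : (ℓ : K) ≠ 0)
    (hK : (¬ ∃ ζ : K, IsPrimitiveRoot ζ ℓ) ∨ (∀ m : ℕ, ∃ ζ : K, IsPrimitiveRoot ζ (ℓ ^ m)))
    (a : K) (ha : a ≠ 0) :
    IsDivisible K ℓ a ∨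
      ∃ d : ℕ, (∃ b : K, StronglyIndivisible K ℓ b ∧ a = b ^ ℓ ^ d) ∧
        ∀ d' : ℕ, ∀ b' : K, StronglyIndivisible K ℓ b' → a = b' ^ ℓ ^ d' → d' = d := by
  by_cases hdiv : IsDivisible K ℓ a
  · exact Or.inl hdiv
  right
  obtain ⟨n, hnn⟩ := not_forall.1 hdiv
  rw [not_exists] at hnn
  classical
  set P : ℕ → Prop := fun d => ∃ b : K, b ^ ℓ ^ d = a with hP
  have hP0 : P 0 := ⟨a, by simp⟩
  have hPn : ¬ P n := by
    rintro ⟨b, hb⟩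
    exact hnn b hb
  set d := Nat.findGreatest P n with hd
  have hPd : P d := Nat.findGreatest_spec (Nat.zero_le n) hP0
  have hdn : d < n := lt_of_le_of_ne (Nat.findGreatest_le n) (fun h => hPn (h ▸ hPd))
  have hPd1 : ¬ P (d + 1) := Nat.findGreatest_is_greatest (Nat.lt_succ_self d) hdn
  obtain ⟨b, hb⟩ := hPd
  have hb0 : b ≠ 0 := by
    intro h0; rw [h0, zero_pow (pow_ne_zero _ hℓ.ne_zero)] at hb; exact ha hb.symm
  have hbnp : ∀ c : K, c ^ ℓ ≠ b := by
    intro c hc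
    exact hPd1 ⟨c, by rw [pow_succ, mul_comm (ℓ ^ d) ℓ, pow_mul, hc, hb]⟩
  have hsi : StronglyIndivisible K ℓ b := by
    intro ξ ⟨k, hk, hξk⟩ c hc
    obtain ⟨e, heℓ⟩ := aux_root_unity_pow K ℓ hℓ hK ξ k hk hξk
    have he0 : e ≠ 0 := by
      intro h0
      rw [h0, zero_pow hℓ.ne_zero] at heℓ
      have hξ0 : ξ ≠ 0 := by
        intro h0'
        rw [h0', zero_pow hk.ne'] at hξk
        exact zero_ne_one hξk
      exact hξ0 heℓ.symm
    apply hbnp (c / e)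
    rw [div_pow, hc, heℓ, mul_div_assoc, div_self, mul_one]
    rw [← heℓ]
    exact pow_ne_zero _ he0
  refine ⟨d, ⟨b, hsi, hb.symm⟩, ?_⟩
  intro d' b' hsi' hb'
  by_contra hne
  rcases lt_or_gt_of_ne hne with hlt | hlt
  · exact aux_unique hℓ ha hb.symm hb' hsi' hlt
  · exact aux_unique hℓ ha hb' hb.symm hsi hlt
end
end

section
/- Let K be a field and ℓ a prime number different from the characteristic of K. Assume K = K_ℓ ≠ K_{ℓ^∞}, and let t > 0 be the greatest integer such that K = K_{ℓ^t}. Then for every a ∈ K^× exactly one of the following holds: (i) a = b^{ℓ^d} for some integer d ≥ 0 and some strongly indivisible b ∈ K^×; (ii) a = b^{ℓ^d}·ξ for some integer d > 0, some strongly indivisible b ∈ K^×, and some root of unity ξ ∈ K of order ℓ^r with r > max(0, t − d); (iii) aξ is divisible in K for some uniquely determined root of unity ξ ∈ K of ℓ-power order. Moreover, in cases (i) and (ii) the integers d and r do not depend on the choice of b. -/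
noncomputable section
open IntermediateField Module

/-- Case (i): `a` is an `ℓ^d`-th power of a strongly indivisible element,
with `d` independent of the choices. -/
def CaseI (K : Type*) [Field K] (ℓ : ℕ) (a : K) : Prop :=
  ∃ d : ℕ, (∃ b : K, StronglyIndivisible K ℓ b ∧ a = b ^ ℓ ^ d) ∧
    ∀ d' : ℕ, ∀ b' : K, StronglyIndivisible K ℓ b' → a = b' ^ ℓ ^ d' → d' = d

/-- Case (ii): `a = b^{ℓ^d}·ξ` with `b` strongly indivisible, `d > 0` and `ξ` a root of
unity of order `ℓ^r` with `r > max(0, t - d)`; `d` and `r` are independent of the choices. -/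
def CaseII (K : Type*) [Field K] (ℓ t : ℕ) (a : K) : Prop :=
  ∃ d r : ℕ, 0 < d ∧ t - d < r ∧
    (∃ b ξ : K, StronglyIndivisible K ℓ b ∧ IsPrimitiveRoot ξ (ℓ ^ r) ∧ a = b ^ ℓ ^ d * ξ) ∧
    ∀ d' r' : ℕ, ∀ b' ξ' : K, 0 < d' → t - d' < r' → StronglyIndivisible K ℓ b' →
      IsPrimitiveRoot ξ' (ℓ ^ r') → a = b' ^ ℓ ^ d' * ξ' → d' = d ∧ r' = r

/-- Case (iii): `aξ` is divisible for a uniquely determined root of unity `ξ ∈ K`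
of `ℓ`-power order. -/
def CaseIII (K : Type*) [Field K] (ℓ : ℕ) (a : K) : Prop :=
  ∃ ξ : K, (∃ r : ℕ, IsPrimitiveRoot ξ (ℓ ^ r)) ∧ IsDivisible K ℓ (a * ξ) ∧
    ∀ ξ' : K, (∃ r : ℕ, IsPrimitiveRoot ξ' (ℓ ^ r)) → IsDivisible K ℓ (a * ξ') → ξ' = ξ


section helpers
variable {K : Type*} [Field K] {ℓ t : ℕ}

lemma pow_one_of_le {x : K} {u v : ℕ} (h : u ≤ v) (hx : x ^ ℓ ^ u = 1) :
    x ^ ℓ ^ v = 1 := by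
  rw [show v = u + (v - u) by omega, pow_add, pow_mul, hx, one_pow]

/-- Any ℓ-power root of unity has order ℓ^r with r ≤ t. -/
lemma mu_prim (hℓ : ℓ.Prime)
    (htg : ∀ u : ℕ, (∃ ζ : K, IsPrimitiveRoot ζ (ℓ ^ u)) → u ≤ t)
    {x : K} {m : ℕ} (hx : x ^ ℓ ^ m = 1) :
    ∃ r ≤ t, IsPrimitiveRoot x (ℓ ^ r) := by
  have hord : orderOf x ∣ ℓ ^ m := orderOf_dvd_of_pow_eq_one hx
  obtain ⟨r, hrm, hr⟩ := (Nat.dvd_prime_pow hℓ).mp hord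
  have hprim : IsPrimitiveRoot x (ℓ ^ r) := hr ▸ IsPrimitiveRoot.orderOf x
  exact ⟨r, htg r ⟨x, hprim⟩, hprim⟩

lemma mu_of_pow (hℓ : ℓ.Prime)
    (htg : ∀ u : ℕ, (∃ ζ : K, IsPrimitiveRoot ζ (ℓ ^ u)) → u ≤ t)
    {x : K} {m : ℕ} (hx : x ^ ℓ ^ m = 1) : x ^ ℓ ^ t = 1 := by
  obtain ⟨r, hrt, hprim⟩ := mu_prim hℓ htg hx
  exact pow_one_of_le hrt hprim.pow_eq_one

lemma mu_root (hℓ : ℓ.Prime)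
    (htg : ∀ u : ℕ, (∃ ζ : K, IsPrimitiveRoot ζ (ℓ ^ u)) → u ≤ t)
    {x : K} {n : ℕ} (hx : (x ^ ℓ ^ n) ^ ℓ ^ t = 1) : x ^ ℓ ^ t = 1 := by
  refine mu_of_pow hℓ htg (m := n + t) ?_
  rw [pow_add, pow_mul]
  exact hx

/-- one-step decomposition of a root of unity: ξ = c^ℓ * η with η ∈ μ and c a root of unity. -/
lemma ru_step (hℓ : ℓ.Prime)
    (htg : ∀ u : ℕ, (∃ ζ : K, IsPrimitiveRoot ζ (ℓ ^ u)) → u ≤ t)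
    {ξ : K} {k : ℕ} (hk : 0 < k) (hξ : ξ ^ k = 1) :
    ∃ c η : K, (∃ k' : ℕ, 0 < k' ∧ c ^ k' = 1) ∧ η ^ ℓ ^ t = 1 ∧ ξ = c ^ ℓ * η := by
  have hξ0 : ξ ≠ 0 := fun h => by simp [h, zero_pow hk.ne'] at hξ
  set s := k.factorization ℓ with hs
  set m := k / ℓ ^ s with hm
  have hks : ℓ ^ s * m = k := Nat.ordProj_mul_ordCompl_eq_self k ℓ
  have hm0 : 0 < m := Nat.pos_of_mul_pos_left (a := ℓ ^ s) (by omega)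
  have hcop : Nat.Coprime ℓ m := Nat.coprime_ordCompl hℓ hk.ne'
  rcases Nat.lt_or_ge 1 m with hm1 | hm1
  · have hcop' : Nat.Coprime (ℓ ^ (s + 1)) m := Nat.Coprime.pow_left _ hcop
    obtain ⟨e, -, he⟩ := Nat.exists_mul_mod_eq_one_of_coprime hcop' hm1
    set q := ℓ ^ (s + 1) * e / m with hq
    have h2 := Nat.div_add_mod (ℓ ^ (s + 1) * e) m
    rw [he] at h2
    refine ⟨ξ ^ (ℓ ^ s * e), (ξ ^ (m * q))⁻¹, ⟨k, hk, ?_⟩, ?_, ?_⟩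
    · rw [← pow_mul, mul_comm (ℓ ^ s * e) k, pow_mul, hξ, one_pow]
    · refine mu_of_pow hℓ htg (m := s) ?_
      rw [inv_pow, ← pow_mul, show m * q * ℓ ^ s = k * q by rw [← hks]; ring,
        pow_mul, hξ, one_pow, inv_one]
    · have h3 : ℓ ^ s * e * ℓ = m * q + 1 := by rw [h2]; ring
      have hc : (ξ ^ (ℓ ^ s * e)) ^ ℓ = ξ ^ (m * q) * ξ := by
        rw [← pow_mul, h3, pow_add, pow_one]
      rw [hc]
      field_simp
  · have hm1' : m = 1 := le_antisymm hm1 hm0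
    have : ξ ^ ℓ ^ s = 1 := by rw [← hξ, ← hks, hm1', mul_one]
    exact ⟨1, ξ, ⟨1, one_pos, one_pow 1⟩, mu_of_pow hℓ htg this, by rw [one_pow, one_mul]⟩

/-- full decomposition: any root of unity is an ℓ^n-th power times an element of μ. -/
lemma ru_decomp (hℓ : ℓ.Prime)
    (htg : ∀ u : ℕ, (∃ ζ : K, IsPrimitiveRoot ζ (ℓ ^ u)) → u ≤ t)
    {ξ : K} {k : ℕ} (hk : 0 < k) (hξ : ξ ^ k = 1) (n : ℕ) :
    ∃ c η : K, η ^ ℓ ^ t = 1 ∧ ξ = c ^ ℓ ^ n * η := by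
  induction n generalizing ξ k with
  | zero => exact ⟨ξ, 1, one_pow _, by simp⟩
  | succ n ih =>
    obtain ⟨c, η, ⟨k', hk', hck⟩, hη, hdec⟩ := ru_step hℓ htg hk hξ
    obtain ⟨c', η', hη', hdec'⟩ := ih hk' hck
    refine ⟨c', η' ^ ℓ * η, ?_, ?_⟩
    · rw [mul_pow, ← pow_mul, mul_comm ℓ (ℓ ^ t), pow_mul, hη', one_pow, one_mul, hη]
    · rw [hdec, hdec', mul_pow, ← pow_mul, ← pow_succ, mul_assoc]

lemma SI.ne_zero (hℓ : ℓ.Prime) {b : K} (hb : StronglyIndivisible K ℓ b) : b ≠ 0 := by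
  intro h
  exact hb 1 ⟨1, one_pos, one_pow 1⟩ 0 (by rw [h, zero_pow hℓ.ne_zero, zero_mul])

lemma SI.mul_ru {b η : K} (hb : StronglyIndivisible K ℓ b)
    {k : ℕ} (hk : 0 < k) (hη : η ^ k = 1) : StronglyIndivisible K ℓ (b * η) := by
  intro ρ hρ c hc
  obtain ⟨k2, hk2, hρk⟩ := hρ
  refine hb (η * ρ) ⟨k * k2, Nat.mul_pos hk hk2, ?_⟩ c (by rw [hc]; ring)
  rw [mul_pow, pow_mul, hη, one_pow, one_mul, mul_comm k k2, pow_mul, hρk, one_pow]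

/-- Key lemma: if b is strongly indivisible and b^{ℓ^d} ξ = c^{ℓ^n} η with ξ, η ∈ μ, then n ≤ d. -/
lemma SI.le (hℓ : ℓ.Prime)
    (htg : ∀ u : ℕ, (∃ ζ : K, IsPrimitiveRoot ζ (ℓ ^ u)) → u ≤ t)
    {b ξ c η : K} {d n : ℕ} (hb : StronglyIndivisible K ℓ b)
    (hξ : ξ ^ ℓ ^ t = 1) (hη : η ^ ℓ ^ t = 1)
    (heq : b ^ ℓ ^ d * ξ = c ^ ℓ ^ n * η) : n ≤ d := by
  by_contra hnd
  push_neg at hnd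
  have hb0 : b ≠ 0 := SI.ne_zero hℓ hb
  have hξ0 : ξ ≠ 0 := fun h => by simp [h, zero_pow (pow_ne_zero t hℓ.ne_zero)] at hξ
  have hη0 : η ≠ 0 := fun h => by simp [h, zero_pow (pow_ne_zero t hℓ.ne_zero)] at hη
  have hc0 : c ≠ 0 := by
    intro h
    rw [h, zero_pow (pow_ne_zero n hℓ.ne_zero), zero_mul] at heq
    exact (mul_ne_zero (pow_ne_zero _ hb0) hξ0) heq
  set w : K := b * (c ^ ℓ ^ (n - d))⁻¹ with hw
  have hcd : (c ^ ℓ ^ (n - d)) ^ ℓ ^ d = c ^ ℓ ^ n := by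
    rw [← pow_mul, ← pow_add, Nat.sub_add_cancel hnd.le]
  have hwd : w ^ ℓ ^ d = η * ξ⁻¹ := by
    have : b ^ ℓ ^ d = c ^ ℓ ^ n * η * ξ⁻¹ := by
      field_simp at heq ⊢
      rw [heq]
    rw [hw, mul_pow, inv_pow, hcd, this]
    field_simp
  have hwmu : w ^ ℓ ^ t = 1 := by
    refine mu_root hℓ htg (n := d) ?_
    rw [hwd, mul_pow, inv_pow, hη, one_mul, hξ, inv_one]
  have hbw : b = (c ^ ℓ ^ (n - d - 1)) ^ ℓ * w := by
    rw [hw, ← pow_mul, ← pow_succ]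
    have : n - d - 1 + 1 = n - d := by omega
    rw [this]
    field_simp
  have hw0 : w ≠ 0 := mul_ne_zero hb0 (inv_ne_zero (pow_ne_zero _ hc0))
  refine hb w⁻¹ ⟨ℓ ^ t, pow_pos hℓ.pos t, by rw [inv_pow, hwmu, inv_one]⟩
    (c ^ ℓ ^ (n - d - 1)) ?_
  rw [hbw]
  field_simp

/-- coset lemma: two representations with the same d differ by a μ-element's ℓ^d-th power. -/
lemma coset_lemma (hℓ : ℓ.Prime)
    (htg : ∀ u : ℕ, (∃ ζ : K, IsPrimitiveRoot ζ (ℓ ^ u)) → u ≤ t)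
    {a b b' ξ ξ' : K} {d : ℕ} (ha : a ≠ 0)
    (hξ : ξ ^ ℓ ^ t = 1) (hξ' : ξ' ^ ℓ ^ t = 1)
    (h1 : a = b ^ ℓ ^ d * ξ) (h2 : a = b' ^ ℓ ^ d * ξ') :
    ∃ u : K, u ^ ℓ ^ t = 1 ∧ ξ' = ξ * u ^ ℓ ^ d := by
  have hξ0 : ξ ≠ 0 := fun h => by simp [h, zero_pow (pow_ne_zero t hℓ.ne_zero)] at hξ
  have hξ'0 : ξ' ≠ 0 := fun h => by simp [h, zero_pow (pow_ne_zero t hℓ.ne_zero)] at hξ'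
  have hb0 : b ≠ 0 := by
    intro h; rw [h1, h, zero_pow (pow_ne_zero d hℓ.ne_zero), zero_mul] at ha; exact ha rfl
  have hb'0 : b' ≠ 0 := by
    intro h; rw [h2, h, zero_pow (pow_ne_zero d hℓ.ne_zero), zero_mul] at ha; exact ha rfl
  have hud : (b * b'⁻¹) ^ ℓ ^ d = ξ' * ξ⁻¹ := by
    rw [mul_pow, inv_pow]
    rw [h1] at h2
    field_simp
    rw [h2]
  refine ⟨b * b'⁻¹, ?_, ?_⟩
  · refine mu_root hℓ htg (n := d) ?_
    rw [hud, mul_pow, inv_pow, hξ', one_mul, hξ, inv_one]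
  · rw [hud]
    field_simp

/-- orders match for elements of the same coset mod μ^{ℓ^d}, when the order exceeds ℓ^{t-d}. -/
lemma order_eq (hℓ : ℓ.Prime) {ξ ξ' u : K} {d r r' : ℕ}
    (hu : u ^ ℓ ^ t = 1) (hco : ξ' = ξ * u ^ ℓ ^ d)
    (hξ : IsPrimitiveRoot ξ (ℓ ^ r)) (hξ' : IsPrimitiveRoot ξ' (ℓ ^ r'))
    (hr : t - d < r) : r' = r := by
  have hv : (u ^ ℓ ^ d) ^ ℓ ^ (t - d) = 1 := by
    rw [← pow_mul, ← pow_add]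
    exact pow_one_of_le (by omega) hu
  have hvr : (u ^ ℓ ^ d) ^ ℓ ^ r = 1 := pow_one_of_le hr.le hv
  have h1 : ξ' ^ ℓ ^ r = 1 := by rw [hco, mul_pow, hξ.pow_eq_one, one_mul, hvr]
  have hle : r' ≤ r :=
    (Nat.pow_dvd_pow_iff_le_right hℓ.one_lt).mp ((hξ'.pow_eq_one_iff_dvd _).mp h1)
  have hvr' : (u ^ ℓ ^ d) ^ ℓ ^ (max r' (t - d)) = 1 :=
    pow_one_of_le (le_max_right _ _) hv
  have h2 : ξ ^ ℓ ^ (max r' (t - d)) = 1 := by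
    have hu0 : u ^ ℓ ^ d ≠ 0 := by
      intro h
      rw [h, zero_pow (pow_ne_zero _ hℓ.ne_zero)] at hv
      exact zero_ne_one hv
    have hxi : ξ = ξ' * (u ^ ℓ ^ d)⁻¹ := by rw [hco]; field_simp
    rw [hxi, mul_pow, inv_pow, hvr', inv_one, mul_one]
    exact pow_one_of_le (le_max_left _ _) hξ'.pow_eq_one
  have hge : r ≤ max r' (t - d) :=
    (Nat.pow_dvd_pow_iff_le_right hℓ.one_lt).mp ((hξ.pow_eq_one_iff_dvd _).mp h2)
  omega

/-- elements of μ killed by ℓ^{t-d} are ℓ^d-th powers of μ-elements. -/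
lemma mu_pow_decomp (hℓ : ℓ.Prime) {ζ ξ : K} {d : ℕ}
    (hζ : IsPrimitiveRoot ζ (ℓ ^ t)) (hξ : ξ ^ ℓ ^ (t - d) = 1) :
    ∃ η : K, η ^ ℓ ^ t = 1 ∧ ξ = η ^ ℓ ^ d := by
  rcases le_or_gt d t with hdt | hdt
  · have hpow : IsPrimitiveRoot (ζ ^ ℓ ^ d) (ℓ ^ (t - d)) :=
      hζ.pow (pow_pos hℓ.pos t) (by rw [← pow_add, Nat.add_sub_cancel' hdt])
    have : NeZero (ℓ ^ (t - d)) := ⟨pow_ne_zero _ hℓ.ne_zero⟩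
    obtain ⟨i, hi, hipow⟩ := hpow.eq_pow_of_pow_eq_one hξ
    refine ⟨ζ ^ i, by rw [← pow_mul, mul_comm, pow_mul, hζ.pow_eq_one, one_pow], ?_⟩
    rw [← hipow, ← pow_mul, ← pow_mul, mul_comm]
  · have : t - d = 0 := by omega
    rw [this, pow_zero, pow_one] at hξ
    exact ⟨1, one_pow _, by rw [hξ, one_pow]⟩

end helpers

theorem stmt_5 (K : Type*) [Field K] (ℓ : ℕ) (hℓ : ℓ.Prime) (hchar : (ℓ : K) ≠ 0)
    (hKl : ∃ ζ : K, IsPrimitiveRoot ζ ℓ)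
    (hKinf : ¬ ∀ m : ℕ, ∃ ζ : K, IsPrimitiveRoot ζ (ℓ ^ m))
    (t : ℕ) (ht0 : 0 < t) (ht : ∃ ζ : K, IsPrimitiveRoot ζ (ℓ ^ t))
    (htg : ∀ u : ℕ, (∃ ζ : K, IsPrimitiveRoot ζ (ℓ ^ u)) → u ≤ t)
    (a : K) (ha : a ≠ 0) :
    (CaseI K ℓ a ∧ ¬ CaseII K ℓ t a ∧ ¬ CaseIII K ℓ a) ∨
    (¬ CaseI K ℓ a ∧ CaseII K ℓ t a ∧ ¬ CaseIII K ℓ a) ∨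
    (¬ CaseI K ℓ a ∧ ¬ CaseII K ℓ t a ∧ CaseIII K ℓ a) := by
  classical
  obtain ⟨ζ, hζ⟩ := ht
  have hℓt0 : (0:ℕ) < ℓ ^ t := pow_pos hℓ.pos t
  set S : ℕ → Prop := fun n => ∃ c η : K, η ^ ℓ ^ t = 1 ∧ a = c ^ ℓ ^ n * η with hSdef
  have hS0 : S 0 := ⟨a, 1, one_pow _, by simp⟩
  have hSdc : ∀ m n : ℕ, m ≤ n → S n → S m := by
    rintro m n hmn ⟨c, η, hη, hc⟩
    exact ⟨c ^ ℓ ^ (n - m), η, hη, by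
      rw [hc, ← pow_mul, ← pow_add, Nat.sub_add_cancel hmn]⟩
  by_cases hdiv : ∀ n : ℕ, S n
  · -- Case III
    right; right
    choose c η hη hac using hdiv
    have hi : ∀ n : ℕ, ∃ i : ℕ, i < ℓ ^ t ∧ ζ ^ i = η n := by
      intro n
      have : NeZero (ℓ ^ t) := ⟨pow_ne_zero _ hℓ.ne_zero⟩
      obtain ⟨i, hilt, hip⟩ := hζ.eq_pow_of_pow_eq_one (hη n)
      exact ⟨i, hilt, hip⟩
    choose i hilt hieq using hi
    obtain ⟨j, hj⟩ := Finite.exists_infinite_fiber (fun n : ℕ => (⟨i n, hilt n⟩ : Fin (ℓ ^ t)))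
    have hfib : ((fun n : ℕ => (⟨i n, hilt n⟩ : Fin (ℓ ^ t))) ⁻¹' {j} : Set ℕ).Infinite :=
      Set.infinite_coe_iff.mp hj
    have hbig : ∀ n : ℕ, ∃ m, n ≤ m ∧ i m = (j : ℕ) := by
      intro n
      by_contra h
      push_neg at h
      refine hfib (Set.Finite.subset (Set.finite_Iio n) ?_)
      intro m hm
      simp only [Set.mem_preimage, Set.mem_singleton_iff] at hm
      have : i m = (j : ℕ) := congrArg Fin.val hm
      exact Set.mem_Iio.mpr (by by_contra hc'; exact absurd this (h m (by omega)))
    have hζ0 : ζ ≠ 0 := hζ.ne_zero (pow_ne_zero t hℓ.ne_zero)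
    have hζj : (ζ ^ (j:ℕ)) ^ ℓ ^ t = 1 := by
      rw [← pow_mul, mul_comm, pow_mul, hζ.pow_eq_one, one_pow]
    set ξ := (ζ ^ (j : ℕ))⁻¹ with hxidef
    have hξmu : ξ ^ ℓ ^ t = 1 := by rw [hxidef, inv_pow, hζj, inv_one]
    have hξ0 : ξ ≠ 0 := inv_ne_zero (pow_ne_zero _ hζ0)
    have hdiva : IsDivisible K ℓ (a * ξ) := by
      intro n
      obtain ⟨m, hnm, hfm⟩ := hbig n
      have hηm : η m = ζ ^ (j : ℕ) := by rw [← hieq m, hfm]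
      refine ⟨c m ^ ℓ ^ (m - n), ?_⟩
      rw [← pow_mul, ← pow_add, Nat.sub_add_cancel hnm, hac m, hηm, hxidef]
      field_simp
    obtain ⟨r0, hr0t, hr0⟩ := mu_prim hℓ htg hξmu
    have huniq : ∀ ξ' : K, (∃ r : ℕ, IsPrimitiveRoot ξ' (ℓ ^ r)) →
        IsDivisible K ℓ (a * ξ') → ξ' = ξ := by
      rintro ξ' ⟨r1, hr1⟩ hdiv1
      have hξ'mu : ξ' ^ ℓ ^ t = 1 := mu_of_pow hℓ htg hr1.pow_eq_one
      have hξ'0 : ξ' ≠ 0 := fun h => by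
        simp [h, zero_pow (pow_ne_zero t hℓ.ne_zero)] at hξ'mu
      obtain ⟨u, hu⟩ := hdiva t
      obtain ⟨v, hv⟩ := hdiv1 t
      have hu0 : u ≠ 0 := by
        intro h
        rw [h, zero_pow (pow_ne_zero t hℓ.ne_zero)] at hu
        exact (mul_ne_zero ha hξ0) hu.symm
      have hw : (v * u⁻¹) ^ ℓ ^ t = ξ' * ξ⁻¹ := by
        rw [mul_pow, inv_pow, hv, hu]
        field_simp
      have hwmu : (v * u⁻¹) ^ ℓ ^ t = 1 := by
        refine mu_root hℓ htg (n := t) ?_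
        rw [hw, mul_pow, inv_pow, hξ'mu, one_mul, hξmu, inv_one]
      have : ξ' * ξ⁻¹ = 1 := by rw [← hw, hwmu]
      calc ξ' = ξ' * ξ⁻¹ * ξ := by field_simp
        _ = ξ := by rw [this, one_mul]
    have hnoSI : ∀ (d1 : ℕ) (b1 ξ1 : K), StronglyIndivisible K ℓ b1 →
        ξ1 ^ ℓ ^ t = 1 → a = b1 ^ ℓ ^ d1 * ξ1 → False := by
      intro d1 b1 ξ1 hb1 hξ1 hab1
      have : d1 + 1 ≤ d1 := SI.le hℓ htg hb1 hξ1 (hη (d1 + 1))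
        (by rw [← hab1]; exact hac (d1 + 1))
      omega
    refine ⟨?_, ?_, ξ, ⟨r0, hr0⟩, hdiva, huniq⟩
    · rintro ⟨d1, ⟨b1, hb1, hab1⟩, -⟩
      exact hnoSI d1 b1 1 hb1 (one_pow _) (by rw [hab1, mul_one])
    · rintro ⟨d2, r2, -, -, ⟨b2, ξ2, hb2, hξ2, hab2⟩, -⟩
      exact hnoSI d2 b2 ξ2 hb2 (mu_of_pow hℓ htg hξ2.pow_eq_one) hab2
  · -- bounded case
    push_neg at hdiv
    obtain ⟨N, hN⟩ := hdiv
    set d := Nat.findGreatest S N with hddef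
    have hSd : S d := Nat.findGreatest_spec (Nat.zero_le N) hS0
    have hmax : ∀ n, S n → n ≤ d := by
      intro n hn
      rcases le_or_gt n N with h | h
      · exact Nat.le_findGreatest h hn
      · exact absurd (hSdc N n h.le hn) hN
    obtain ⟨b, ξ, hξmu, hab⟩ := hSd
    have hξ0 : ξ ≠ 0 := fun h => by
      simp [h, zero_pow (pow_ne_zero t hℓ.ne_zero)] at hξmu
    have hb0 : b ≠ 0 := by
      intro h
      rw [h, zero_pow (pow_ne_zero d hℓ.ne_zero), zero_mul] at hab
      exact ha hab
    have hbSI : StronglyIndivisible K ℓ b := by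
      rintro ρ ⟨k, hk, hρ⟩ cc hcc
      have hρ0 : ρ ≠ 0 := fun h => by simp [h, zero_pow hk.ne'] at hρ
      have hρinv : ρ⁻¹ ^ k = 1 := by rw [inv_pow, hρ, inv_one]
      obtain ⟨c2, η2, hη2, hdec⟩ := ru_decomp hℓ htg hk hρinv 1
      have hb' : b = (cc * c2) ^ ℓ * η2 := by
        have hbcc : b = cc ^ ℓ * ρ⁻¹ := by
          rw [hcc]; field_simp
        rw [hbcc, hdec, pow_one, mul_pow]
        ring
      have hs1 : S (d + 1) := by
        refine ⟨cc * c2, η2 ^ ℓ ^ d * ξ, ?_, ?_⟩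
        · rw [mul_pow, ← pow_mul, mul_comm (ℓ ^ d) (ℓ ^ t), pow_mul, hη2, one_pow,
            one_mul, hξmu]
        · rw [hab, hb', show ℓ ^ (d + 1) = ℓ * ℓ ^ d by ring, pow_mul, mul_pow]
          ring
      have := hmax (d + 1) hs1
      omega
    have hnoIII : ¬ CaseIII K ℓ a := by
      rintro ⟨ξ3, ⟨r3, hr3⟩, hdiv3, -⟩
      obtain ⟨cc, hcc⟩ := hdiv3 (d + 1)
      have hξ3mu : ξ3 ^ ℓ ^ t = 1 := mu_of_pow hℓ htg hr3.pow_eq_one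
      have hξ30 : ξ3 ≠ 0 := fun h => by
        simp [h, zero_pow (pow_ne_zero t hℓ.ne_zero)] at hξ3mu
      have hs1 : S (d + 1) := by
        refine ⟨cc, ξ3⁻¹, by rw [inv_pow, hξ3mu, inv_one], ?_⟩
        rw [hcc]
        field_simp
      have := hmax (d + 1) hs1
      omega
    obtain ⟨r, hrt, hξprim⟩ := mu_prim hℓ htg hξmu
    by_cases hcase : ∃ η : K, η ^ ℓ ^ t = 1 ∧ ξ = η ^ ℓ ^ d
    · -- Case I
      left
      obtain ⟨η, hημ, hξη⟩ := hcase
      have habI : a = (b * η) ^ ℓ ^ d := by rw [mul_pow, ← hξη, hab]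
      have hbηSI : StronglyIndivisible K ℓ (b * η) := SI.mul_ru hbSI hℓt0 hημ
      refine ⟨⟨d, ⟨b * η, hbηSI, habI⟩, ?_⟩, ?_, hnoIII⟩
      · intro d' b' hb' hab'
        have h1 : d' ≤ d := SI.le hℓ htg hbηSI (one_pow _) (one_pow _)
          (by rw [mul_one, mul_one, ← habI]; exact hab')
        have h2 : d ≤ d' := SI.le hℓ htg hb' (one_pow _) (one_pow _)
          (by rw [mul_one, mul_one, ← hab']; exact habI)
        omega
      · rintro ⟨d2, r2, hd2, hr2, ⟨b2, ξ2, hb2, hξ2, hab2⟩, -⟩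
        have hξ2mu : ξ2 ^ ℓ ^ t = 1 := mu_of_pow hℓ htg hξ2.pow_eq_one
        have h1 : d2 ≤ d := SI.le hℓ htg hbηSI (one_pow _) hξ2mu
          (by rw [mul_one, ← habI]; exact hab2)
        have h2 : d ≤ d2 := SI.le hℓ htg hb2 hξ2mu (one_pow _)
          (by rw [mul_one, ← hab2]; exact habI)
        have hd2d : d2 = d := by omega
        subst hd2d
        obtain ⟨u, humu, hco⟩ := coset_lemma hℓ htg ha (one_pow _) hξ2mu
          (by rw [habI, mul_one]) hab2
        rw [one_mul] at hco
        have hξ2small : ξ2 ^ ℓ ^ (t - d) = 1 := by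
          rw [hco, ← pow_mul, ← pow_add]
          exact pow_one_of_le (by omega) humu
        have : r2 ≤ t - d := (Nat.pow_dvd_pow_iff_le_right hℓ.one_lt).mp
          ((hξ2.pow_eq_one_iff_dvd _).mp hξ2small)
        omega
    · -- Case II
      right; left
      have hrgt : t - d < r := by
        by_contra hcon
        push_neg at hcon
        have : ξ ^ ℓ ^ (t - d) = 1 := pow_one_of_le hcon hξprim.pow_eq_one
        obtain ⟨η, hημ, hξη⟩ := mu_pow_decomp hℓ hζ this
        exact hcase ⟨η, hημ, hξη⟩
      have hd0 : 0 < d := by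
        rcases Nat.eq_zero_or_pos d with h | h
        · omega
        · exact h
      refine ⟨?_, ⟨d, r, hd0, hrgt, ⟨b, ξ, hbSI, hξprim, hab⟩, ?_⟩, hnoIII⟩
      · rintro ⟨d1, ⟨b1, hb1, hab1⟩, -⟩
        have h1 : d1 ≤ d := SI.le hℓ htg hbSI hξmu (one_pow _)
          (by rw [mul_one, ← hab]; exact hab1)
        have h2 : d ≤ d1 := SI.le hℓ htg hb1 (one_pow _) hξmu
          (by rw [mul_one, ← hab1]; exact hab)
        have hd1d : d1 = d := by omega
        subst hd1d
        obtain ⟨u, humu, hco⟩ := coset_lemma hℓ htg ha hξmu (one_pow _)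
          hab (by rw [hab1, mul_one])
        have huinv : (u⁻¹) ^ ℓ ^ t = 1 := by rw [inv_pow, humu, inv_one]
        have hu0 : u ≠ 0 := fun h => by
          simp [h, zero_pow (pow_ne_zero t hℓ.ne_zero)] at humu
        refine hcase ⟨u⁻¹, huinv, ?_⟩
        have h1 : ξ * u ^ ℓ ^ d = 1 := hco.symm
        rw [inv_pow]
        exact eq_inv_of_mul_eq_one_left h1
      · intro d' r' b' ξ' hd' hr' hb' hξ'prim hab'
        have hξ'mu : ξ' ^ ℓ ^ t = 1 := mu_of_pow hℓ htg hξ'prim.pow_eq_one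
        have h1 : d' ≤ d := SI.le hℓ htg hbSI hξmu hξ'mu (by rw [← hab]; exact hab')
        have h2 : d ≤ d' := SI.le hℓ htg hb' hξ'mu hξmu (by rw [← hab']; exact hab)
        have hd'd : d' = d := by omega
        subst hd'd
        obtain ⟨u, humu, hco⟩ := coset_lemma hℓ htg ha hξmu hξ'mu hab hab'
        exact ⟨rfl, order_eq hℓ humu hco hξprim hξ'prim hrgt⟩
end
end

section
/- Let K be a field and ℓ an odd prime number different from the characteristic of K, with K ≠ K_{ℓ^∞}. Then the degree [K_ℓ : K] divides ℓ − 1. If K_ℓ ≠ K_{ℓ^∞}, and t ≥ 1 is the greatest integer such that K_ℓ = K_{ℓ^t}, then for every m ≥ 2 one has [K_{ℓ^m} : K] = [K_ℓ : K] · ℓ^{max(0, m−t)}. If K_ℓ = K_{ℓ^∞}, then [K_{ℓ^m} : K] = [K_ℓ : K] for every m ≥ 2. -/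
noncomputable section
open IntermediateField Module

section aux

variable {K : Type*} [Field K]

lemma natCast_ne_zero_ac {n : ℕ} (h : (n : K) ≠ 0) : (n : AlgebraicClosure K) ≠ 0 := by
  intro h0
  apply h
  have : algebraMap K (AlgebraicClosure K) (n : K) = 0 := by rw [map_natCast]; exact h0
  simpa using (algebraMap K (AlgebraicClosure K)).injective (by simpa using this)

lemma exists_prim {ℓ : ℕ} (hℓ : 0 < ℓ) (hchar : (ℓ : K) ≠ 0) (m : ℕ) :
    ∃ ζ : AlgebraicClosure K, IsPrimitiveRoot ζ (ℓ ^ m) := by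
  have h1 : ((ℓ ^ m : ℕ) : AlgebraicClosure K) ≠ 0 := by
    apply natCast_ne_zero_ac
    push_cast
    exact pow_ne_zero _ hchar
  have : NeZero ((ℓ ^ m : ℕ) : AlgebraicClosure K) := ⟨h1⟩
  exact HasEnoughRootsOfUnity.exists_primitiveRoot _ _

lemma cyclo_eq_adjoin {n : ℕ} (hn : 0 < n) {ζ : AlgebraicClosure K}
    (hζ : IsPrimitiveRoot ζ n) : cyclo K n = K⟮ζ⟯ := by
  have : NeZero n := ⟨hn.ne'⟩
  apply le_antisymm
  · rw [cyclo, adjoin_le_iff]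
    intro x hx
    obtain ⟨i, -, hi⟩ := hζ.eq_pow_of_pow_eq_one hx.pow_eq_one
    exact hi ▸ pow_mem (mem_adjoin_simple_self K ζ) i
  · exact adjoin_simple_le_iff.mpr (subset_adjoin K _ hζ)

lemma cyclo_mono {ℓ : ℕ} (hℓ : 0 < ℓ) (hchar : (ℓ : K) ≠ 0) {a b : ℕ} (hab : a ≤ b) :
    cyclo K (ℓ ^ a) ≤ cyclo K (ℓ ^ b) := by
  obtain ⟨ζ, hζ⟩ := exists_prim hℓ hchar (K := K) b
  have hprod : ℓ ^ b = ℓ ^ (b - a) * ℓ ^ a := by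
    rw [← pow_add, Nat.sub_add_cancel hab]
  have hpow : IsPrimitiveRoot (ζ ^ ℓ ^ (b - a)) (ℓ ^ a) :=
    hζ.pow (pow_pos hℓ b) hprod
  rw [cyclo_eq_adjoin (pow_pos hℓ a) hpow, cyclo_eq_adjoin (pow_pos hℓ b) hζ]
  exact adjoin_simple_le_iff.mpr (pow_mem (mem_adjoin_simple_self K ζ) _)

end aux

section part1
variable {K : Type*} [Field K]

lemma finrank_cyclo_dvd {ℓ : ℕ} (hℓ : ℓ.Prime) (hchar : (ℓ : K) ≠ 0) :
    finrank K (cyclo K ℓ) ∣ ℓ - 1 := by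
  obtain ⟨ζ, hζ⟩ := exists_prim hℓ.pos hchar (K := K) 1
  rw [pow_one] at hζ
  have hint : IsIntegral K ζ := Algebra.IsIntegral.isIntegral ζ
  have hE : cyclo K ℓ = K⟮ζ⟯ := cyclo_eq_adjoin hℓ.pos hζ
  set n : ℕ+ := ⟨ℓ, hℓ.pos⟩ with hn
  have hζ' : IsPrimitiveRoot ζ (n : ℕ) := hζ
  haveI : NeZero (n : ℕ) := ⟨hℓ.pos.ne'⟩
  have halg : IsCyclotomicExtension {(n : ℕ)} K (Algebra.adjoin K ({ζ} : Set (AlgebraicClosure K))) :=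
    hζ'.adjoin_isCyclotomicExtension K
  have e : (Algebra.adjoin K ({ζ} : Set (AlgebraicClosure K))) ≃ₐ[K] K⟮ζ⟯ :=
    Subalgebra.equivOfEq _ _ (adjoin_simple_toSubalgebra_of_isAlgebraic hint.isAlgebraic).symm
  haveI : IsCyclotomicExtension {(n : ℕ)} K K⟮ζ⟯ := IsCyclotomicExtension.equiv {(n : ℕ)} K _ e
  haveI : FiniteDimensional K K⟮ζ⟯ := adjoin.finiteDimensional hint
  haveI : IsGalois K K⟮ζ⟯ := IsCyclotomicExtension.isGalois {(n : ℕ)} K _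
  -- ζ as element of K⟮ζ⟯
  have hmem : ζ ∈ K⟮ζ⟯ := mem_adjoin_simple_self K ζ
  have hμ : IsPrimitiveRoot (⟨ζ, hmem⟩ : K⟮ζ⟯) (n : ℕ) := by
    rwa [← IsPrimitiveRoot.coe_submonoidClass_iff]
  haveI : NeZero (n : ℕ) := ⟨hℓ.pos.ne'⟩
  have hinj := hμ.autToPow_injective K
  have hdvd : Nat.card (K⟮ζ⟯ ≃ₐ[K] K⟮ζ⟯) ∣ Nat.card (ZMod (n : ℕ))ˣ :=
    Subgroup.card_dvd_of_injective _ hinj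
  have hcard : Nat.card (ZMod (n : ℕ))ˣ = ℓ - 1 := by
    haveI : Fact ℓ.Prime := ⟨hℓ⟩
    rw [Nat.card_eq_fintype_card, ZMod.card_units_eq_totient, hn]
    exact Nat.totient_prime hℓ
  rw [hE, ← IsGalois.card_aut_eq_finrank]
  rw [hcard] at hdvd
  exact hdvd

end part1

section part2
variable {K : Type*} [Field K]

lemma no_ell_pow {ℓ : ℕ} (hℓ : ℓ.Prime) (hchar : (ℓ : K) ≠ 0)
    {t : ℕ} (ht : 1 ≤ t) (heq : cyclo K (ℓ ^ t) = cyclo K ℓ)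
    (hmax : ∀ u : ℕ, cyclo K (ℓ ^ u) = cyclo K ℓ → u ≤ t)
    {ζt : AlgebraicClosure K} (hζt : IsPrimitiveRoot ζt (ℓ ^ t))
    (b : cyclo K ℓ) : (b : AlgebraicClosure K) ^ ℓ ≠ ζt := by
  intro hb
  set x : AlgebraicClosure K := (b : AlgebraicClosure K) with hxdef
  -- orderOf x = ℓ ^ (t + 1)
  have h1 : x ^ ℓ ^ (t + 1) = 1 := by
    rw [pow_succ', pow_mul, hb, hζt.pow_eq_one]
  have hdvd : orderOf x ∣ ℓ ^ (t + 1) := orderOf_dvd_of_pow_eq_one h1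
  obtain ⟨j, hj, hordx⟩ := (Nat.dvd_prime_pow hℓ).mp hdvd
  have hordxl : orderOf (x ^ ℓ) = ℓ ^ t := by rw [hb]; exact hζt.eq_orderOf.symm
  have hcalc : ℓ ^ t = ℓ ^ j / Nat.gcd (ℓ ^ j) ℓ := by
    rw [← hordx, ← hordxl, orderOf_pow' _ hℓ.pos.ne']
  have hj1 : 1 ≤ j := by
    by_contra hjj
    interval_cases j
    simp at hcalc
    have := hℓ.one_lt
    have := Nat.one_lt_pow (Nat.one_le_iff_ne_zero.mp ht) hℓ.one_lt
    omega
  have hgcd : Nat.gcd (ℓ ^ j) ℓ = ℓ := Nat.gcd_eq_right (dvd_pow_self ℓ (Nat.one_le_iff_ne_zero.mp hj1))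
  have hjt : j = t + 1 := by
    have hdivpow : ℓ ^ j / ℓ = ℓ ^ (j - 1) := by
      conv_lhs => rw [show j = (j - 1) + 1 by omega, pow_succ]
      exact Nat.mul_div_cancel _ hℓ.pos
    rw [hgcd, hdivpow] at hcalc
    have := Nat.pow_right_injective hℓ.two_le hcalc
    omega
  have hord : orderOf x = ℓ ^ (t + 1) := by rw [hordx, hjt]
  have hprim : IsPrimitiveRoot x (ℓ ^ (t + 1)) := by
    rw [← hord]; exact IsPrimitiveRoot.orderOf x
  have hle : cyclo K (ℓ ^ (t + 1)) = cyclo K ℓ := by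
    apply le_antisymm
    · rw [cyclo_eq_adjoin (pow_pos hℓ.pos _) hprim]
      exact adjoin_simple_le_iff.mpr b.2
    · have := cyclo_mono (K := K) hℓ.pos hchar (Nat.le_add_left 1 t)
      rwa [pow_one] at this
  exact absurd (hmax _ hle) (by omega)

end part2

section part2b
variable {K : Type*} [Field K]

lemma finrank_cyclo_pow {ℓ : ℕ} (hℓ : ℓ.Prime) (hodd : Odd ℓ) (hchar : (ℓ : K) ≠ 0)
    {t : ℕ} (ht : 1 ≤ t) (heq : cyclo K (ℓ ^ t) = cyclo K ℓ)
    (hmax : ∀ u : ℕ, cyclo K (ℓ ^ u) = cyclo K ℓ → u ≤ t)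
    {m : ℕ} (htm : t ≤ m) :
    finrank K (cyclo K (ℓ ^ m)) = finrank K (cyclo K ℓ) * ℓ ^ (m - t) := by
  classical
  set L := AlgebraicClosure K
  obtain ⟨ζm, hζm⟩ := exists_prim hℓ.pos hchar (K := K) m
  set d := m - t with hd
  have hprod : ℓ ^ m = ℓ ^ d * ℓ ^ t := by rw [← pow_add]; congr 1; omega
  have hζt : IsPrimitiveRoot (ζm ^ ℓ ^ d) (ℓ ^ t) := hζm.pow (pow_pos hℓ.pos m) hprod
  set F := cyclo K ℓ with hF
  have hζtF : ζm ^ ℓ ^ d ∈ F := by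
    rw [← heq]
    exact subset_adjoin K _ hζt
  set bt : F := ⟨ζm ^ ℓ ^ d, hζtF⟩ with hbt
  -- irreducibility
  have hne2 : ℓ ≠ 2 := by rintro rfl; exact absurd (Nat.odd_iff.mp hodd) (by norm_num)
  have hirr : Irreducible (Polynomial.X ^ ℓ ^ d - Polynomial.C bt) := by
    apply X_pow_sub_C_irreducible_of_prime_pow hℓ hne2
    intro b hb
    apply no_ell_pow hℓ hchar ht heq hmax hζt b
    have := congrArg (algebraMap F L) hb
    rwa [map_pow] at this
  have hint : IsIntegral F ζm := Algebra.IsIntegral.isIntegral ζm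
  have hmp : minpoly F ζm = Polynomial.X ^ ℓ ^ d - Polynomial.C bt := by
    refine (minpoly.eq_of_irreducible_of_monic hirr ?_ ?_).symm
    · simp only [map_sub, map_pow, Polynomial.aeval_X, Polynomial.aeval_C]
      rw [sub_eq_zero]
      rfl
    · exact Polynomial.monic_X_pow_sub_C _ (pow_ne_zero _ hℓ.pos.ne')
  have hfr : finrank F F⟮ζm⟯ = ℓ ^ d := by
    rw [adjoin.finrank hint, hmp, Polynomial.natDegree_X_pow_sub_C]
  -- identify restrictScalars
  have hFle : F ≤ K⟮ζm⟯ := by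
    rw [← cyclo_eq_adjoin (pow_pos hℓ.pos m) hζm, hF]
    have := cyclo_mono (K := K) hℓ.pos hchar (le_trans ht htm)
    rwa [pow_one] at this
  have hres : (F⟮ζm⟯).restrictScalars K = cyclo K (ℓ ^ m) := by
    rw [restrictScalars_adjoin_eq_sup, cyclo_eq_adjoin (pow_pos hℓ.pos m) hζm]
    exact sup_eq_right.mpr hFle
  have htower : finrank K (F⟮ζm⟯.restrictScalars K) = finrank K F * finrank F F⟮ζm⟯ := by
    rw [Module.finrank_mul_finrank K F F⟮ζm⟯]
    rfl
  rw [← hres, htower, hfr, hF]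
end part2b

theorem stmt_6 (K : Type*) [Field K] (ℓ : ℕ) (hℓ : ℓ.Prime) (hodd : Odd ℓ)
    (hchar : (ℓ : K) ≠ 0) (hKinf : cycloInf K ℓ ≠ ⊥) :
    finrank K (cyclo K ℓ) ∣ ℓ - 1 ∧
    (∀ t : ℕ, 1 ≤ t → cyclo K (ℓ ^ t) = cyclo K ℓ →
      (∀ u : ℕ, cyclo K (ℓ ^ u) = cyclo K ℓ → u ≤ t) →
      cyclo K ℓ ≠ cycloInf K ℓ →
      ∀ m : ℕ, 2 ≤ m →
        finrank K (cyclo K (ℓ ^ m)) = finrank K (cyclo K ℓ) * ℓ ^ (m - t)) ∧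
    (cyclo K ℓ = cycloInf K ℓ →
      ∀ m : ℕ, 2 ≤ m → finrank K (cyclo K (ℓ ^ m)) = finrank K (cyclo K ℓ)) := by
  have hmono1 : ∀ m : ℕ, 1 ≤ m → cyclo K ℓ ≤ cyclo K (ℓ ^ m) := by
    intro m hm
    have := cyclo_mono (K := K) hℓ.pos hchar hm
    rwa [pow_one] at this
  refine ⟨finrank_cyclo_dvd hℓ hchar, ?_, ?_⟩
  · intro t ht heq hmax _hne m hm
    by_cases hmt : t ≤ m
    · exact finrank_cyclo_pow hℓ hodd hchar ht heq hmax hmt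
    · push_neg at hmt
      have hsub : m - t = 0 := by omega
      have hcm : cyclo K (ℓ ^ m) = cyclo K ℓ :=
        le_antisymm ((cyclo_mono hℓ.pos hchar hmt.le).trans heq.le) (hmono1 m (by omega))
      rw [hcm, hsub, pow_zero, mul_one]
  · intro hEq m hm
    have h1 : cyclo K (ℓ ^ m) ≤ cycloInf K ℓ := le_iSup (fun m => cyclo K (ℓ ^ m)) m
    have hcm : cyclo K (ℓ ^ m) = cyclo K ℓ :=
      le_antisymm (h1.trans hEq.ge) (hmono1 m (by omega))
    rw [hcm]
end
end
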